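/- Let n ≥ 1, let A : [0,∞) → ℝ^{n×n} be a continuous matrix-valued function and w : ℝⁿ × [0,∞) → ℝⁿ be continuous. Assume: (1) ∫₀^t μ₂[A(s)] ds → -∞ as t → ∞; (2) there exists T ≥ 0 such that μ₂[A(t)] < 0 for all t ≥ T; (3) there is a continuous function g : [0,∞) → [0,∞) with ‖w(x,t)‖₂ ≤ g(t) for all x ∈ ℝⁿ and t ≥ 0, and g(t)/μ₂[A(t)] → 0 as t → ∞. Then every solution x : [0,∞) → ℝⁿ of the perturbed system ẋ(t) = A(t)x(t) + w(x(t), t) satisfies ‖x(t)‖₂ → 0 as t → ∞. -/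

import Mathlib

open Filter Matrix

open Set intervalIntegral MeasureTheory
open scoped RealInnerProductSpace Topology

lemma add_transpose_isHermitian {n : ℕ} (A : Matrix (Fin n) (Fin n) ℝ) :
    (A + Aᵀ).IsHermitian := by
  ext i j
  simp [Matrix.conjTranspose_apply, Matrix.transpose_apply, add_comm]

/-- The largest eigenvalue of a real symmetric matrix. -/
noncomputable def lambdaMax {n : ℕ} (M : Matrix (Fin n) (Fin n) ℝ) (hM : M.IsHermitian) : ℝ :=
  ⨆ i, hM.eigenvalues i

/-- The Euclidean logarithmic norm `μ₂[A] = (1/2)·λ_max(A + Aᵀ)`. -/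
noncomputable def mu2 {n : ℕ} (A : Matrix (Fin n) (Fin n) ℝ) : ℝ :=
  (1 / 2) * lambdaMax (A + Aᵀ) (add_transpose_isHermitian A)

lemma eigvec_apply {n : ℕ} (M : Matrix (Fin n) (Fin n) ℝ) (hM : M.IsHermitian) (i : Fin n) :
    Matrix.toEuclideanLin M (hM.eigenvectorBasis i) = hM.eigenvalues i • hM.eigenvectorBasis i := by
  have h := hM.mulVec_eigenvectorBasis i
  ext1 j
  exact congrFun h j

lemma rayleigh_le {n : ℕ} (M : Matrix (Fin n) (Fin n) ℝ) (hM : M.IsHermitian)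
    (x : EuclideanSpace ℝ (Fin n)) :
    ⟪x, Matrix.toEuclideanLin M x⟫ ≤ lambdaMax M hM * ‖x‖ ^ 2 := by
  classical
  set b := hM.eigenvectorBasis with hb
  have hsym : (Matrix.toEuclideanLin M).IsSymmetric :=
    Matrix.isHermitian_iff_isSymmetric.mp hM
  have hle : ∀ i, hM.eigenvalues i ≤ lambdaMax M hM := fun i =>
    le_ciSup (Set.Finite.bddAbove (Set.finite_range _)) i
  have key : ⟪x, Matrix.toEuclideanLin M x⟫
      = ∑ i, hM.eigenvalues i * (⟪x, b i⟫ * ⟪b i, x⟫) := by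
    rw [← b.sum_inner_mul_inner x (Matrix.toEuclideanLin M x)]
    congr 1
    ext i
    have : ⟪b i, Matrix.toEuclideanLin M x⟫ = hM.eigenvalues i * ⟪b i, x⟫ := by
      rw [← hsym (b i) x, eigvec_apply M hM i, inner_smul_left]
      simp [hb]
    rw [this]; ring
  have hnorm : ∑ i, ⟪x, b i⟫ * ⟪b i, x⟫ = ‖x‖ ^ 2 := by
    rw [b.sum_inner_mul_inner x x, real_inner_self_eq_norm_sq]
  rw [key, ← hnorm, Finset.mul_sum]
  apply Finset.sum_le_sum
  intro i _
  have hnn : 0 ≤ ⟪x, b i⟫ * ⟪b i, x⟫ := by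
    rw [real_inner_comm x (b i)]; exact mul_self_nonneg _
  exact mul_le_mul_of_nonneg_right (hle i) hnn

lemma exists_unit_rayleigh {n : ℕ} (hn : 1 ≤ n) (M : Matrix (Fin n) (Fin n) ℝ)
    (hM : M.IsHermitian) :
    ∃ v : EuclideanSpace ℝ (Fin n), ‖v‖ = 1 ∧
      ⟪v, Matrix.toEuclideanLin M v⟫ = lambdaMax M hM := by
  haveI : Nonempty (Fin n) := ⟨⟨0, hn⟩⟩
  obtain ⟨i, hi⟩ := Finite.exists_max hM.eigenvalues
  refine ⟨hM.eigenvectorBasis i, hM.eigenvectorBasis.orthonormal.1 i, ?_⟩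
  have hmax : lambdaMax M hM = hM.eigenvalues i :=
    le_antisymm (ciSup_le hi) (le_ciSup (Set.Finite.bddAbove (Set.finite_range _)) i)
  rw [eigvec_apply M hM i, inner_smul_right, hmax, real_inner_self_eq_norm_sq,
    hM.eigenvectorBasis.orthonormal.1 i]
  simp

lemma inner_transpose_same {n : ℕ} (M : Matrix (Fin n) (Fin n) ℝ) (y : EuclideanSpace ℝ (Fin n)) :
    ⟪y, Matrix.toEuclideanLin Mᵀ y⟫ = ⟪y, Matrix.toEuclideanLin M y⟫ := by
  simp only [Matrix.toEuclideanLin_apply, PiLp.inner_apply, RCLike.inner_apply, conj_trivial,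
    Matrix.mulVec, dotProduct,
    Matrix.transpose_apply, Finset.mul_sum, Finset.sum_mul]
  rw [Finset.sum_comm]
  congr 1; ext i; congr 1; ext j; ring

lemma inner_le_mu2 {n : ℕ} (A : Matrix (Fin n) (Fin n) ℝ) (y : EuclideanSpace ℝ (Fin n)) :
    ⟪y, Matrix.toEuclideanLin A y⟫ ≤ mu2 A * ‖y‖ ^ 2 := by
  have h := rayleigh_le (A + Aᵀ) (add_transpose_isHermitian A) y
  rw [map_add] at h
  simp only [LinearMap.add_apply, inner_add_right, inner_transpose_same] at h
  rw [mu2]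
  nlinarith [h]

/-- matrices to CLM, as a linear map -/
noncomputable def matCLM {n : ℕ} (M : Matrix (Fin n) (Fin n) ℝ) :
    EuclideanSpace ℝ (Fin n) →L[ℝ] EuclideanSpace ℝ (Fin n) :=
  LinearMap.toContinuousLinearMap (Matrix.toEuclideanLin M)

lemma matCLM_sub {n : ℕ} (M N : Matrix (Fin n) (Fin n) ℝ) :
    matCLM (M - N) = matCLM M - matCLM N := by
  ext v
  simp [matCLM, map_sub]

lemma continuous_matCLM {n : ℕ} : Continuous (matCLM (n := n)) := by
  have : IsLinearMap ℝ (matCLM (n := n)) := by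
    constructor <;> intro a b <;> ext v <;> simp [matCLM, map_add, _root_.map_smul]
  exact (IsLinearMap.mk' _ this).continuous_of_finiteDimensional

lemma lambdaMax_sub_le {n : ℕ} (hn : 1 ≤ n) (M N : Matrix (Fin n) (Fin n) ℝ)
    (hM : M.IsHermitian) (hN : N.IsHermitian) :
    lambdaMax M hM - lambdaMax N hN ≤ ‖matCLM (M - N)‖ := by
  obtain ⟨v, hv1, hv2⟩ := exists_unit_rayleigh hn M hM
  have h1 : lambdaMax M hM = ⟪v, Matrix.toEuclideanLin N v⟫
      + ⟪v, Matrix.toEuclideanLin (M - N) v⟫ := by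
    rw [← hv2, ← inner_add_right, ← LinearMap.add_apply, ← map_add]
    norm_num
  have h2 : ⟪v, Matrix.toEuclideanLin N v⟫ ≤ lambdaMax N hN := by
    have := rayleigh_le N hN v
    rwa [hv1, one_pow, mul_one] at this
  have h3 : ⟪v, Matrix.toEuclideanLin (M - N) v⟫ ≤ ‖matCLM (M - N)‖ := by
    calc ⟪v, Matrix.toEuclideanLin (M - N) v⟫ ≤ ‖v‖ * ‖Matrix.toEuclideanLin (M - N) v‖ :=
          real_inner_le_norm _ _
      _ = ‖matCLM (M - N) v‖ := by rw [hv1, one_mul]; rfl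
      _ ≤ ‖matCLM (M - N)‖ * ‖v‖ := (matCLM (M - N)).le_opNorm v
      _ = ‖matCLM (M - N)‖ := by rw [hv1, mul_one]
  linarith

lemma abs_mu2_sub_le {n : ℕ} (hn : 1 ≤ n) (M N : Matrix (Fin n) (Fin n) ℝ) :
    |mu2 M - mu2 N| ≤ ‖matCLM (M + Mᵀ) - matCLM (N + Nᵀ)‖ := by
  have h1 := lambdaMax_sub_le hn (M + Mᵀ) (N + Nᵀ) (add_transpose_isHermitian M)
    (add_transpose_isHermitian N)
  have h2 := lambdaMax_sub_le hn (N + Nᵀ) (M + Mᵀ) (add_transpose_isHermitian N)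
    (add_transpose_isHermitian M)
  rw [matCLM_sub] at h1 h2
  rw [← norm_neg (matCLM (N + Nᵀ) - matCLM (M + Mᵀ)), neg_sub] at h2
  rw [mu2, mu2, abs_le]
  constructor <;> nlinarith [abs_nonneg (lambdaMax (M + Mᵀ) (add_transpose_isHermitian M) -
    lambdaMax (N + Nᵀ) (add_transpose_isHermitian N))]

lemma continuousOn_mu2 {n : ℕ} (hn : 1 ≤ n) (A : ℝ → Matrix (Fin n) (Fin n) ℝ)
    (hA : ContinuousOn A (Set.Ici (0 : ℝ))) :
    ContinuousOn (fun t => mu2 (A t)) (Set.Ici (0 : ℝ)) := by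
  have hS : ContinuousOn (fun t => matCLM (A t + (A t)ᵀ)) (Set.Ici (0 : ℝ)) :=
    continuous_matCLM.comp_continuousOn (hA.add ((Continuous.matrix_transpose continuous_id).comp_continuousOn hA))
  intro t0 ht0
  have hS0 := hS t0 ht0
  rw [ContinuousWithinAt, tendsto_iff_dist_tendsto_zero]
  apply squeeze_zero (fun t => dist_nonneg)
    (g := fun t => ‖matCLM (A t + (A t)ᵀ) - matCLM (A t0 + (A t0)ᵀ)‖)
  · intro t
    rw [Real.dist_eq]
    exact abs_mu2_sub_le hn (A t) (A t0)
  · have : ContinuousWithinAt (fun t => matCLM (A t + (A t)ᵀ) - matCLM (A t0 + (A t0)ᵀ)) (Set.Ici 0) t0 := hS0.sub continuousWithinAt_const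
    have h2 := this.norm
    rw [ContinuousWithinAt] at h2
    simp only [sub_self, norm_zero] at h2
    exact h2

variable {E : Type*} [NormedAddCommGroup E] [InnerProductSpace ℝ E]

lemma hasDerivAt_norm_comp {x : ℝ → E} {x' : E} {t : ℝ} (h : HasDerivAt x x' t)
    (hz : x t ≠ 0) :
    HasDerivAt (fun s => ‖x s‖) (⟪x t, x'⟫ / ‖x t‖) t := by
  have hnz : ‖x t‖ ≠ 0 := norm_ne_zero_iff.mpr hz
  have h1 : HasDerivAt (fun s => ⟪x s, x s⟫) (⟪x t, x'⟫ + ⟪x', x t⟫) t := h.inner ℝ h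
  have hip : ⟪x t, x t⟫ ≠ 0 := by
    rw [real_inner_self_eq_norm_sq]
    positivity
  have h2 := (Real.hasDerivAt_sqrt hip).comp t h1
  have heq : (Real.sqrt ∘ fun s => ⟪x s, x s⟫) = fun s => ‖x s‖ := by
    ext s
    rw [Function.comp_apply, real_inner_self_eq_norm_mul_norm, Real.sqrt_mul_self (norm_nonneg _)]
  rw [heq] at h2
  refine h2.congr_deriv ?_
  rw [real_inner_comm x' (x t)]
  rw [real_inner_self_eq_norm_mul_norm, Real.sqrt_mul_self (norm_nonneg _)]
  field_simp
  ring

lemma norm_le_of_gronwall {x : ℝ → E} {x' : ℝ → E} {μ g B B' : ℝ → ℝ} {a b : ℝ}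
    (hx : ∀ t ∈ Icc a b, HasDerivAt x (x' t) t)
    (hinner : ∀ t ∈ Icc a b, ⟪x t, x' t⟫ ≤ μ t * ‖x t‖ ^ 2 + g t * ‖x t‖)
    (hzero : ∀ t ∈ Icc a b, x t = 0 → ‖x' t‖ ≤ g t)
    (hB : ∀ t ∈ Icc a b, HasDerivAt B (B' t) t)
    (hBa : ‖x a‖ ≤ B a)
    (hcomp : ∀ t ∈ Ico a b, ‖x t‖ = B t → μ t * ‖x t‖ + g t < B' t) :
    ∀ t ∈ Icc a b, ‖x t‖ ≤ B t := by
  have hfc : ContinuousOn (fun t => ‖x t‖) (Icc a b) := fun t ht =>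
    ((hx t ht).continuousAt.norm).continuousWithinAt
  have hBc : ContinuousOn B (Icc a b) := fun t ht =>
    (hB t ht).continuousAt.continuousWithinAt
  refine image_le_of_liminf_slope_right_lt_deriv_boundary' (f' := fun t => μ t * ‖x t‖ + g t)
    hfc ?_ hBa hBc (fun t ht => (hB t (Ico_subset_Icc_self ht)).hasDerivWithinAt)
    hcomp
  intro t ht r hr
  by_cases hz : x t = 0
  · have h1 : ‖x' t‖ < r := by
      have := hzero t (Ico_subset_Icc_self ht) hz
      simp only [hz, norm_zero, mul_zero, zero_add] at hr
      linarith
    exact ((hx t (Ico_subset_Icc_self ht)).hasDerivWithinAt).liminf_right_slope_norm_le h1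
  · have hd := hasDerivAt_norm_comp (hx t (Ico_subset_Icc_self ht)) hz
    have hpos : (0:ℝ) < ‖x t‖ := norm_pos_iff.mpr hz
    have hle : ⟪x t, x' t⟫ / ‖x t‖ ≤ μ t * ‖x t‖ + g t := by
      rw [div_le_iff₀ hpos]
      calc ⟪x t, x' t⟫ ≤ μ t * ‖x t‖ ^ 2 + g t * ‖x t‖ := hinner t (Ico_subset_Icc_self ht)
        _ = (μ t * ‖x t‖ + g t) * ‖x t‖ := by ring
    exact hd.hasDerivWithinAt.liminf_right_slope_le (lt_of_le_of_lt hle hr)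


lemma key_estimate {x x' : ℝ → E} {m g : ℝ → ℝ}
    (hm : ContinuousOn m (Set.Ici 0)) (hgc : ContinuousOn g (Set.Ici 0))
    (hx : ∀ t, 0 ≤ t → HasDerivAt x (x' t) t)
    (hinner : ∀ t, 0 ≤ t → ⟪x t, x' t⟫ ≤ m t * ‖x t‖ ^ 2 + g t * ‖x t‖)
    (hzero : ∀ t, 0 ≤ t → x t = 0 → ‖x' t‖ ≤ g t)
    (a : ℝ) (ha : 1 ≤ a) (b : ℝ) (hab : a ≤ b) :
    ‖x b‖ ≤ Real.exp (∫ s in a..b, m s) * ‖x a‖ +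
      Real.exp (∫ s in a..b, m s) * ∫ s in a..b, g s * Real.exp (-(∫ u in a..s, m u)) := by
  have ha0 : (0:ℝ) < a := lt_of_lt_of_le one_pos ha
  set M : ℝ → ℝ := fun t => ∫ s in a..t, m s with hMdef
  have hmAt : ∀ s, 0 < s → ContinuousAt m s := fun s hs =>
    hm.continuousAt (Ici_mem_nhds hs)
  have hgAt : ∀ s, 0 < s → ContinuousAt g s := fun s hs =>
    hgc.continuousAt (Ici_mem_nhds hs)
  have hsub : ∀ t : ℝ, 0 ≤ t → Set.uIcc a t ⊆ Set.Ici 0 := by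
    intro t ht s hs
    rcases Set.mem_uIcc.mp hs with ⟨h1, _⟩ | ⟨h1, _⟩
    · exact le_trans ha0.le h1
    · exact le_trans ht h1
  have hmint : ∀ t, 0 ≤ t → IntervalIntegrable m volume a t := fun t ht =>
    (hm.mono (hsub t ht)).intervalIntegrable
  have hM' : ∀ t, 0 < t → HasDerivAt M (m t) t := by
    intro t ht
    exact intervalIntegral.integral_hasDerivAt_right (hmint t ht.le)
      (ContinuousAt.stronglyMeasurableAtFilter isOpen_Ioi (fun s hs => hmAt s hs) t ht)
      (hmAt t ht)
  have hMAt : ∀ t, 0 < t → ContinuousAt M t := fun t ht => (hM' t ht).continuousAt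
  -- the perturbed integrand
  have hFAt : ∀ δ : ℝ, ∀ s, 0 < s →
      ContinuousAt (fun u => (g u + δ) * Real.exp (-(M u))) s := by
    intro δ s hs
    exact ((hgAt s hs).add continuousAt_const).mul ((hMAt s hs).neg.rexp)
  have hFint : ∀ δ : ℝ, ∀ t, a ≤ t →
      IntervalIntegrable (fun u => (g u + δ) * Real.exp (-(M u))) volume a t := by
    intro δ t ht
    apply ContinuousOn.intervalIntegrable
    rw [Set.uIcc_of_le ht]
    intro s hs
    exact (hFAt δ s (lt_of_lt_of_le ha0 hs.1)).continuousWithinAt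
  have hN' : ∀ δ : ℝ, ∀ t, a ≤ t →
      HasDerivAt (fun u => ∫ s in a..u, (g s + δ) * Real.exp (-(M s)))
        ((g t + δ) * Real.exp (-(M t))) t := by
    intro δ t ht
    have htpos : 0 < t := lt_of_lt_of_le ha0 ht
    exact intervalIntegral.integral_hasDerivAt_right (hFint δ t ht)
      (ContinuousAt.stronglyMeasurableAtFilter isOpen_Ioi (fun s hs => hFAt δ s hs) t htpos)
      (hFAt δ t htpos)
  have hMa : M a = 0 := intervalIntegral.integral_same
  -- Step 1: for every δ > 0, the fencing bound
  have step1 : ∀ δ : ℝ, 0 < δ →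
      ‖x b‖ ≤ Real.exp (M b) * (‖x a‖ + δ + ∫ s in a..b, (g s + δ) * Real.exp (-(M s))) := by
    intro δ hδ
    set B : ℝ → ℝ := fun u =>
      Real.exp (M u) * (‖x a‖ + δ + ∫ s in a..u, (g s + δ) * Real.exp (-(M s))) with hBdef
    have hB' : ∀ t, a ≤ t → HasDerivAt B (m t * B t + (g t + δ)) t := by
      intro t ht
      have htpos : 0 < t := lt_of_lt_of_le ha0 ht
      have h1 : HasDerivAt (fun u => Real.exp (M u)) (m t * Real.exp (M t)) t := by
        have := (hM' t htpos).exp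
        convert this using 1
        ring
      have h2 : HasDerivAt
          (fun u => ‖x a‖ + δ + ∫ s in a..u, (g s + δ) * Real.exp (-(M s)))
          ((g t + δ) * Real.exp (-(M t))) t := (hN' δ t ht).const_add _
      have h3 := h1.mul h2
      have hme : Real.exp (M t) * Real.exp (-(M t)) = 1 := by
        rw [← Real.exp_add]; simp
      have key2 : Real.exp (M t) * ((g t + δ) * Real.exp (-(M t))) = g t + δ := by
        rw [mul_comm (g t + δ) (Real.exp (-(M t))), ← mul_assoc, hme, one_mul]
      refine h3.congr_deriv ?_
      simp only [hBdef]
      rw [key2]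
      ring
    have hBa : ‖x a‖ ≤ B a := by
      simp only [hBdef, hMa, Real.exp_zero, intervalIntegral.integral_same, add_zero, one_mul]
      linarith
    have hcomp : ∀ t ∈ Set.Ico a b, ‖x t‖ = B t →
        m t * ‖x t‖ + g t < m t * B t + (g t + δ) := by
      intro t htt heq
      rw [heq]
      linarith
    exact norm_le_of_gronwall
      (fun t htt => hx t (le_trans ha0.le htt.1))
      (fun t htt => hinner t (le_trans ha0.le htt.1))
      (fun t htt => hzero t (le_trans ha0.le htt.1))
      (fun t htt => hB' t htt.1)
      hBa hcomp b (Set.right_mem_Icc.mpr hab)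
  -- Step 2: split the integral and take δ → 0
  have hschange : ∀ δ : ℝ, 0 < δ →
      (∫ s in a..b, (g s + δ) * Real.exp (-(M s)))
        = (∫ s in a..b, g s * Real.exp (-(M s))) + δ * ∫ s in a..b, Real.exp (-(M s)) := by
    intro δ hδ
    have h0 : IntervalIntegrable (fun u => g u * Real.exp (-(M u))) volume a b := by
      have := hFint 0 b hab
      simpa using this
    have h1 : IntervalIntegrable (fun u => Real.exp (-(M u))) volume a b := by
      apply ContinuousOn.intervalIntegrable
      rw [Set.uIcc_of_le hab]
      intro s hs
      exact ((hMAt s (lt_of_lt_of_le ha0 hs.1)).neg.rexp).continuousWithinAt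
    calc (∫ s in a..b, (g s + δ) * Real.exp (-(M s)))
        = ∫ s in a..b, (g s * Real.exp (-(M s)) + δ * Real.exp (-(M s))) := by
          apply intervalIntegral.integral_congr
          intro s _
          ring
      _ = (∫ s in a..b, g s * Real.exp (-(M s))) + ∫ s in a..b, δ * Real.exp (-(M s)) :=
          intervalIntegral.integral_add h0 (h1.const_mul δ)
      _ = (∫ s in a..b, g s * Real.exp (-(M s))) + δ * ∫ s in a..b, Real.exp (-(M s)) := by
          rw [intervalIntegral.integral_const_mul]
  set K : ℝ := Real.exp (M b) * (1 + ∫ s in a..b, Real.exp (-(M s))) with hKdef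
  have hKpos : 0 < K := by
    apply mul_pos (Real.exp_pos _)
    have : 0 ≤ ∫ s in a..b, Real.exp (-(M s)) := by
      apply intervalIntegral.integral_nonneg hab
      intro u _
      exact (Real.exp_pos _).le
    linarith
  have final : ∀ ε : ℝ, 0 < ε → ‖x b‖ ≤
      (Real.exp (M b) * ‖x a‖ + Real.exp (M b) * ∫ s in a..b, g s * Real.exp (-(M s))) + ε := by
    intro ε hε
    have hδ : 0 < ε / K := div_pos hε hKpos
    have h1 := step1 (ε / K) hδ
    rw [hschange (ε / K) hδ] at h1
    have : Real.exp (M b) * (‖x a‖ + ε / K +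
        ((∫ s in a..b, g s * Real.exp (-(M s))) + ε / K * ∫ s in a..b, Real.exp (-(M s))))
        = (Real.exp (M b) * ‖x a‖ + Real.exp (M b) * ∫ s in a..b, g s * Real.exp (-(M s)))
          + (ε / K) * K := by
      rw [hKdef]; ring
    rw [this, div_mul_cancel₀ ε (ne_of_gt hKpos)] at h1
    exact h1
  exact le_of_forall_pos_le_add final

/-- robustness of global attractivity of the origin of an LTV system
under perturbations `w(x,t)` dominated by `g(t)` with `g(t)/μ₂[A(t)] → 0`. -/
theorem stmt_1 (n : ℕ) (hn : 1 ≤ n)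
    (A : ℝ → Matrix (Fin n) (Fin n) ℝ)
    (hA : ContinuousOn A (Set.Ici (0 : ℝ)))
    (w : EuclideanSpace ℝ (Fin n) → ℝ → EuclideanSpace ℝ (Fin n))
    (hw : ContinuousOn (fun p : EuclideanSpace ℝ (Fin n) × ℝ => w p.1 p.2)
      (Set.univ ×ˢ Set.Ici (0 : ℝ)))
    (hμ : Tendsto (fun t : ℝ => ∫ s in (0:ℝ)..t, mu2 (A s)) atTop atBot)
    (hneg : ∃ T : ℝ, 0 ≤ T ∧ ∀ t : ℝ, T ≤ t → mu2 (A t) < 0)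
    (g : ℝ → ℝ)
    (hg : ContinuousOn g (Set.Ici (0 : ℝ)))
    (hg0 : ∀ t : ℝ, 0 ≤ t → 0 ≤ g t)
    (hbound : ∀ (y : EuclideanSpace ℝ (Fin n)) (t : ℝ), 0 ≤ t → ‖w y t‖ ≤ g t)
    (hratio : Tendsto (fun t : ℝ => g t / mu2 (A t)) atTop (nhds 0))
    (x : ℝ → EuclideanSpace ℝ (Fin n))
    (hx : ∀ t : ℝ, 0 ≤ t →
      HasDerivAt x (Matrix.toEuclideanLin (A t) (x t) + w (x t) t) t) :
    Tendsto (fun t : ℝ => ‖x t‖) atTop (nhds 0) := by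
  classical
  obtain ⟨T, hT0, hTneg⟩ := hneg
  set m : ℝ → ℝ := fun t => mu2 (A t) with hmdef
  have hcontm : ContinuousOn m (Set.Ici 0) := continuousOn_mu2 hn A hA
  set x' : ℝ → EuclideanSpace ℝ (Fin n) :=
    fun t => Matrix.toEuclideanLin (A t) (x t) + w (x t) t with hx'def
  have hxd : ∀ t, 0 ≤ t → HasDerivAt x (x' t) t := hx
  have hinner : ∀ t, 0 ≤ t → ⟪x t, x' t⟫ ≤ m t * ‖x t‖ ^ 2 + g t * ‖x t‖ := by
    intro t ht
    rw [hx'def]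
    simp only [inner_add_right]
    have h1 := inner_le_mu2 (A t) (x t)
    have h2 : ⟪x t, w (x t) t⟫ ≤ g t * ‖x t‖ := by
      calc ⟪x t, w (x t) t⟫ ≤ ‖x t‖ * ‖w (x t) t‖ := real_inner_le_norm _ _
        _ ≤ ‖x t‖ * g t := mul_le_mul_of_nonneg_left (hbound (x t) t ht) (norm_nonneg _)
        _ = g t * ‖x t‖ := mul_comm _ _
    linarith
  have hzero : ∀ t, 0 ≤ t → x t = 0 → ‖x' t‖ ≤ g t := by
    intro t ht hz
    rw [hx'def]
    simp only [hz, map_zero, zero_add]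
    exact hbound 0 t ht
  have hmint0 : ∀ c : ℝ, 0 ≤ c → IntervalIntegrable m volume 0 c := by
    intro c hc
    apply ContinuousOn.intervalIntegrable
    rw [Set.uIcc_of_le hc]
    exact hcontm.mono (fun s hs => hs.1)
  rw [Metric.tendsto_atTop]
  intro ε hε
  obtain ⟨t₁, ht₁⟩ := Metric.tendsto_atTop.mp hratio (ε / 4) (by linarith)
  set a := max (max T 1) t₁ with hadef
  have haT : T ≤ a := le_trans (le_max_left _ _) (le_max_left _ _)
  have ha1 : 1 ≤ a := le_trans (le_max_right _ _) (le_max_left _ _)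
  have hat₁ : t₁ ≤ a := le_max_right _ _
  have ha0 : (0:ℝ) < a := lt_of_lt_of_le one_pos ha1
  have hga : ∀ s, a ≤ s → g s ≤ ε / 4 * (-(m s)) := by
    intro s hs
    have hms : m s < 0 := hTneg s (le_trans haT hs)
    have h1 := ht₁ s (le_trans hat₁ hs)
    rw [Real.dist_eq, sub_zero, abs_div, abs_of_nonneg (hg0 s (le_trans ha0.le hs)),
      abs_of_neg hms] at h1
    have := (div_lt_iff₀ (by linarith : (0:ℝ) < -m s)).mp h1
    linarith
  set M : ℝ → ℝ := fun t => ∫ s in a..t, m s with hMdef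
  have hminta : ∀ t : ℝ, a ≤ t → IntervalIntegrable m volume a t := by
    intro t ht
    apply ContinuousOn.intervalIntegrable
    rw [Set.uIcc_of_le ht]
    exact hcontm.mono (fun s hs => le_trans ha0.le hs.1)
  have hM' : ∀ u : ℝ, a ≤ u → HasDerivAt M (m u) u := by
    intro u hu
    have hu0 : 0 < u := lt_of_lt_of_le ha0 hu
    exact intervalIntegral.integral_hasDerivAt_right (hminta u hu)
      (ContinuousAt.stronglyMeasurableAtFilter isOpen_Ioi
        (fun s hs => hcontm.continuousAt (Ici_mem_nhds hs)) u hu0)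
      (hcontm.continuousAt (Ici_mem_nhds hu0))
  -- M t → -∞ and hence exp (M t) * ‖x a‖ → 0
  have hMsplit : ∀ t : ℝ, a ≤ t → M t = (∫ s in (0:ℝ)..t, m s) - ∫ s in (0:ℝ)..a, m s := by
    intro t ht
    have h1 := intervalIntegral.integral_add_adjacent_intervals (μ := volume)
      (hmint0 a ha0.le) (hminta t ht)
    rw [hMdef]
    simp only
    linarith [h1]
  have hexp : Tendsto (fun t => Real.exp (M t) * ‖x a‖) atTop (𝓝 0) := by
    have h1 : Tendsto (fun t => (∫ s in (0:ℝ)..t, m s) - ∫ s in (0:ℝ)..a, m s) atTop atBot :=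
      tendsto_atBot_add_const_right _ _ hμ
    have h2 : Tendsto M atTop atBot :=
      h1.congr' (by
        filter_upwards [eventually_ge_atTop a] with t ht
        exact (hMsplit t ht).symm)
    have h3 : Tendsto (fun t => Real.exp (M t)) atTop (𝓝 0) :=
      Real.tendsto_exp_atBot.comp h2
    simpa using h3.mul_const ‖x a‖
  obtain ⟨t₂, ht₂⟩ := Metric.tendsto_atTop.mp hexp (ε / 4) (by linarith)
  refine ⟨max a t₂, fun t htt => ?_⟩
  have hta : a ≤ t := le_trans (le_max_left _ _) htt
  have hxa4 : Real.exp (M t) * ‖x a‖ < ε / 4 := by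
    have := ht₂ t (le_trans (le_max_right _ _) htt)
    rw [Real.dist_eq, sub_zero] at this
    calc Real.exp (M t) * ‖x a‖ ≤ |Real.exp (M t) * ‖x a‖| := le_abs_self _
      _ < ε / 4 := this
  have hkey : ‖x t‖ ≤ Real.exp (M t) * ‖x a‖ +
      Real.exp (M t) * ∫ s in a..t, g s * Real.exp (-(M s)) :=
    key_estimate hcontm hg hxd hinner hzero a ha1 t hta
  -- bound the integral term
  have hMAt : ∀ s, a ≤ s → ContinuousAt M s := fun s hs => (hM' s hs).continuousAt
  have hint1 : IntervalIntegrable (fun s => g s * Real.exp (-(M s))) volume a t := by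
    apply ContinuousOn.intervalIntegrable
    rw [Set.uIcc_of_le hta]
    intro s hs
    have hs0 : 0 < s := lt_of_lt_of_le ha0 hs.1
    have c1 : ContinuousAt g s := hg.continuousAt (Ici_mem_nhds hs0)
    have c2 : ContinuousAt (fun u => Real.exp (-(M u))) s := (hMAt s hs.1).neg.rexp
    exact (c1.mul c2).continuousWithinAt
  have hint2 : IntervalIntegrable (fun s => ε / 4 * (-(m s)) * Real.exp (-(M s))) volume a t := by
    apply ContinuousOn.intervalIntegrable
    rw [Set.uIcc_of_le hta]
    intro s hs
    have hs0 : 0 < s := lt_of_lt_of_le ha0 hs.1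
    have c1 : ContinuousAt (fun u => ε / 4 * (-(m u))) s :=
      ((hcontm.continuousAt (Ici_mem_nhds hs0)).neg).const_mul _
    have c2 : ContinuousAt (fun u => Real.exp (-(M u))) s := (hMAt s hs.1).neg.rexp
    exact (c1.mul c2).continuousWithinAt
  have hcalc : (∫ s in a..t, ε / 4 * (-(m s)) * Real.exp (-(M s)))
      = ε / 4 * Real.exp (-(M t)) - ε / 4 * Real.exp (-(M a)) := by
    have hder : ∀ s ∈ Set.uIcc a t,
        HasDerivAt (fun u => ε / 4 * Real.exp (-(M u))) (ε / 4 * (-(m s)) * Real.exp (-(M s))) s := by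
      intro s hs
      rw [Set.uIcc_of_le hta] at hs
      have h1 := ((hM' s hs.1).neg.exp).const_mul (ε / 4)
      refine h1.congr_deriv ?_
      rw [Pi.neg_apply]
      ring
    have := intervalIntegral.integral_eq_sub_of_hasDerivAt hder hint2
    rw [this]
  have hMa : M a = 0 := intervalIntegral.integral_same
  have hmono : (∫ s in a..t, g s * Real.exp (-(M s)))
      ≤ ε / 4 * Real.exp (-(M t)) - ε / 4 := by
    have h1 : (∫ s in a..t, g s * Real.exp (-(M s)))
        ≤ ∫ s in a..t, ε / 4 * (-(m s)) * Real.exp (-(M s)) := by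
      apply intervalIntegral.integral_mono_on hta hint1 hint2
      intro s hs
      exact mul_le_mul_of_nonneg_right (hga s hs.1) (Real.exp_pos _).le
    rw [hcalc, hMa, neg_zero, Real.exp_zero] at h1
    linarith
  have hee : Real.exp (M t) * Real.exp (-(M t)) = 1 := by
    rw [← Real.exp_add]; simp
  have hterm2 : Real.exp (M t) * (∫ s in a..t, g s * Real.exp (-(M s))) ≤ ε / 4 := by
    have h2 : Real.exp (M t) * (∫ s in a..t, g s * Real.exp (-(M s)))
        ≤ Real.exp (M t) * (ε / 4 * Real.exp (-(M t)) - ε / 4) :=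
      mul_le_mul_of_nonneg_left hmono (Real.exp_pos _).le
    have h3 : Real.exp (M t) * (ε / 4 * Real.exp (-(M t)) - ε / 4)
        = ε / 4 - ε / 4 * Real.exp (M t) := by
      have : Real.exp (M t) * (ε / 4 * Real.exp (-(M t))) = ε / 4 := by
        rw [mul_comm (ε / 4) (Real.exp (-(M t))), ← mul_assoc, hee, one_mul]
      nlinarith [this]
    rw [h3] at h2
    nlinarith [Real.exp_pos (M t)]
  rw [Real.dist_eq, sub_zero, abs_of_nonneg (norm_nonneg _)]
  calc ‖x t‖ ≤ Real.exp (M t) * ‖x a‖ +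
      Real.exp (M t) * ∫ s in a..t, g s * Real.exp (-(M s)) := hkey
    _ < ε / 4 + ε / 4 := add_lt_add_of_lt_of_le hxa4 hterm2
    _ ≤ ε := by linarith
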